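/- Let V be a finite-dimensional complex inner product space, a : V × V → ℂ a bounded bilinear form, b : V → ℂ and Q : V → ℂ linear forms. Let u ∈ V satisfy a(u,w) = b(w) for all w ∈ V (primal problem), and let v ∈ V satisfy a(w,v) = Q(w) for all w ∈ V (dual problem). Let û, v̂ ∈ V be arbitrary, and let g ∈ V be the Riesz representative of the primal residual, i.e. ⟪g, w⟫ = a(û,w) − b(w) for all w ∈ V. Then the error in the dual-corrected output satisfies the exact representation Q(u) − ( Q(û) − ⟪g, v̂⟫ ) = −⟪g, v − v̂⟫. -/

import Mathlib

/-- Exact error representation for the dual-corrected output: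
if `u` solves the primal problem `a(u,·) = b`, `v` solves the dual problem
`a(·,v) = Q`, and `g` is the Riesz representative of the primal residual
`w ↦ a(uhat,w) − b(w)`, then
`Q(u) − (Q(uhat) − ⟪g, vhat⟫) = −⟪g, v − vhat⟫`. -/
theorem stmt2 {V : Type*} [NormedAddCommGroup V] [InnerProductSpace ℂ V]
    [FiniteDimensional ℂ V]
    (a : V →ₗ[ℂ] V →ₗ[ℂ] ℂ) (b Q : V →ₗ[ℂ] ℂ)
    (C : ℝ) (hbound : ∀ u v : V, ‖a u v‖ ≤ C * ‖u‖ * ‖v‖)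
    (u : V) (hu : ∀ w : V, a u w = b w)
    (v : V) (hv : ∀ w : V, a w v = Q w)
    (uhat vhat : V) (g : V) (hg : ∀ w : V, (inner ℂ g w : ℂ) = a uhat w - b w) :
    Q u - (Q uhat - (inner ℂ g vhat : ℂ)) = -(inner ℂ g (v - vhat) : ℂ) := by
  rw [inner_sub_right, hg v, hg vhat, ← hv u, ← hv uhat, hu v]
  ring
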